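/- arXiv:1702.06422 — 3 statements merged into one kernel-verified Lean document; each statement's English description precedes it below -/
import Mathlib

section
/- For n > 0, the geometric polynomial has the explicit formula w_n(y) = y · ∑_{k=1}^{n} S(n,k) (-1)^{n+k} k! (y+1)^{k-1}. -/
def stirling2 : ℕ → ℕ → ℕ
  | 0, 0 => 1
  | 0, _ + 1 => 0
  | _ + 1, 0 => 0
  | n + 1, k + 1 => (k + 1) * stirling2 n (k + 1) + stirling2 n k

lemma stirling2_gt : ∀ n k, n < k → stirling2 n k = 0 := by
  intro n
  induction n with
  | zero => intro k hk; cases k with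
    | zero => omega
    | succ m => rfl
  | succ n ih =>
    intro k hk
    cases k with
    | zero => omega
    | succ m =>
      show (m + 1) * stirling2 n (m + 1) + stirling2 n m = 0
      rw [ih (m+1) (by omega), ih m (by omega)]; ring

lemma stirling2_zero {n : ℕ} (hn : 0 < n) : stirling2 n 0 = 0 := by
  cases n with
  | zero => omega
  | succ m => rfl

lemma key (n : ℕ) (hn : 1 ≤ n) : ∀ j : ℕ,
    ∑ k ∈ Finset.range (n+1),
        ((-1:ℝ)^k * (Nat.factorial k) * (Nat.choose k j) * (stirling2 n k))
      = (-1)^n * ((Nat.factorial j) * (stirling2 n j)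
          + (Nat.factorial (j+1)) * (stirling2 n (j+1))) := by
  induction n, hn using Nat.le_induction with
  | base =>
    intro j
    rw [Finset.sum_range_succ, Finset.sum_range_succ, Finset.sum_range_zero]
    match j with
    | 0 => norm_num [stirling2]
    | 1 => norm_num [stirling2]
    | (j+2) =>
      rw [Nat.choose_eq_zero_of_lt (by omega : (1:ℕ) < j+2),
          stirling2_gt 1 (j+2) (by omega), stirling2_gt 1 (j+3) (by omega)]
      norm_num [stirling2]
  | succ n hn ih =>
    intro j
    have hstep : ∑ k ∈ Finset.range (n+2),
        ((-1:ℝ)^k * (Nat.factorial k) * (Nat.choose k j) * (stirling2 (n+1) k))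
        = ∑ k ∈ Finset.range (n+1),
            ((-1:ℝ)^k * (Nat.factorial k) * (stirling2 n k))
              * ((k : ℝ) * (Nat.choose k j) - ((k:ℝ)+1) * (Nat.choose (k+1) j)) := by
      rw [Finset.sum_range_succ']
      have h0 : ((-1:ℝ)^0 * (Nat.factorial 0) * (Nat.choose 0 j) * (stirling2 (n+1) 0)) = 0 := by
        simp [stirling2_zero (by omega : 0 < n+1)]
      rw [h0, add_zero]
      have hsplit : ∀ k ∈ Finset.range (n+1),
          ((-1:ℝ)^(k+1) * (Nat.factorial (k+1)) * (Nat.choose (k+1) j) * (stirling2 (n+1) (k+1)))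
          = (-1:ℝ)^(k+1) * (Nat.factorial (k+1)) * ((k:ℝ)+1) * (Nat.choose (k+1) j) * (stirling2 n (k+1))
            + (-1:ℝ)^(k+1) * (Nat.factorial (k+1)) * (Nat.choose (k+1) j) * (stirling2 n k) := by
        intro k _
        have : stirling2 (n+1) (k+1) = (k+1) * stirling2 n (k+1) + stirling2 n k := rfl
        rw [this]; push_cast; ring
      rw [Finset.sum_congr rfl hsplit, Finset.sum_add_distrib]
      -- first sum: reindex
      have hg0 : ((-1:ℝ)^0 * (Nat.factorial 0) * (0:ℝ) * (Nat.choose 0 j) * (stirling2 n 0)) = 0 := by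
        ring
      have hA : ∑ k ∈ Finset.range (n+1),
          ((-1:ℝ)^(k+1) * (Nat.factorial (k+1)) * ((k:ℝ)+1) * (Nat.choose (k+1) j) * (stirling2 n (k+1)))
          = ∑ k ∈ Finset.range (n+1),
            ((-1:ℝ)^k * (Nat.factorial k) * (k:ℝ) * (Nat.choose k j) * (stirling2 n k)) := by
        have h1 := Finset.sum_range_succ'
          (fun k => ((-1:ℝ)^k * (Nat.factorial k) * (k:ℝ) * (Nat.choose k j) * (stirling2 n k))) (n+1)
        have h2 := Finset.sum_range_succ
          (fun k => ((-1:ℝ)^k * (Nat.factorial k) * (k:ℝ) * (Nat.choose k j) * (stirling2 n k))) (n+1)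
        rw [stirling2_gt n (n+1) (by omega)] at h2
        push_cast at h1 h2 ⊢
        rw [h1] at h2
        -- h2 : ∑ f(k+1) + f 0 = ∑_{range(n+1)} f + 0-term
        nlinarith [h2]
      rw [hA, ← Finset.sum_add_distrib]
      apply Finset.sum_congr rfl
      intro k _
      have hfac : (Nat.factorial (k+1) : ℝ) = ((k:ℝ)+1) * (Nat.factorial k) := by
        rw [Nat.factorial_succ]; push_cast; ring
      rw [hfac]; ring
    rw [hstep]
    match j with
    | 0 =>
      have hc : ∀ k ∈ Finset.range (n+1),
          ((-1:ℝ)^k * (Nat.factorial k) * (stirling2 n k))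
            * ((k : ℝ) * (Nat.choose k 0) - ((k:ℝ)+1) * (Nat.choose (k+1) 0))
          = -((-1:ℝ)^k * (Nat.factorial k) * (Nat.choose k 0) * (stirling2 n k)) := by
        intro k _
        rw [Nat.choose_zero_right, Nat.choose_zero_right]; push_cast; ring
      rw [Finset.sum_congr rfl hc, Finset.sum_neg_distrib, ih 0]
      have e1 : stirling2 (n+1) 0 = 0 := rfl
      have e2 : stirling2 (n+1) 1 = 1 * stirling2 n 1 + stirling2 n 0 := rfl
      have e3 : stirling2 n 0 = 0 := stirling2_zero (by omega)
      rw [e1, e2, e3]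
      push_cast; ring
    | (m+1) =>
      have hc : ∀ k ∈ Finset.range (n+1),
          ((-1:ℝ)^k * (Nat.factorial k) * (stirling2 n k))
            * ((k : ℝ) * (Nat.choose k (m+1)) - ((k:ℝ)+1) * (Nat.choose (k+1) (m+1)))
          = (-((m:ℝ)+2)) * ((-1:ℝ)^k * (Nat.factorial k) * (Nat.choose k (m+1)) * (stirling2 n k))
            + (-((m:ℝ)+1)) * ((-1:ℝ)^k * (Nat.factorial k) * (Nat.choose k m) * (stirling2 n k)) := by
        intro k _
        have h1 : ((k:ℝ) + 1) * (Nat.choose k m : ℝ)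
            = ((Nat.choose k m : ℝ) + (Nat.choose k (m+1) : ℝ)) * ((m:ℝ)+1) := by
          have h := Nat.add_one_mul_choose_eq k m
          rw [Nat.choose_succ_succ] at h
          exact_mod_cast h
        rw [Nat.choose_succ_succ k m]
        push_cast
        linear_combination ((-1:ℝ)^k * (Nat.factorial k) * (stirling2 n k)) * (-h1)
      rw [Finset.sum_congr rfl hc, Finset.sum_add_distrib, ← Finset.mul_sum, ← Finset.mul_sum,
        ih (m+1), ih m]
      have e2 : stirling2 (n+1) (m+1) = (m+1) * stirling2 n (m+1) + stirling2 n m := rfl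
      have e3 : stirling2 (n+1) (m+2) = (m+2) * stirling2 n (m+2) + stirling2 n (m+1) := rfl
      rw [e2, e3]
      have f1 : (Nat.factorial (m+1) : ℝ) = ((m:ℝ)+1) * (Nat.factorial m) := by
        rw [Nat.factorial_succ]; push_cast; ring
      have f2 : (Nat.factorial (m+2) : ℝ) = ((m:ℝ)+2) * (Nat.factorial (m+1)) := by
        rw [Nat.factorial_succ]; push_cast; ring
      rw [f2, f1]
      push_cast; ring

/-- The geometric polynomials `w_n(y) = ∑_{k=0}^n S(n,k)·k!·y^k`. -/
def geomPoly (n : ℕ) (y : ℝ) : ℝ :=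
  ∑ k ∈ Finset.range (n + 1), (stirling2 n k : ℝ) * (Nat.factorial k : ℝ) * y ^ k

theorem geomPoly_explicit (n : ℕ) (hn : 0 < n) (y : ℝ) :
    geomPoly n y
      = y * ∑ k ∈ Finset.Icc 1 n,
          (stirling2 n k : ℝ) * (-1) ^ (n + k) * (Nat.factorial k : ℝ) * (y + 1) ^ (k - 1) := by
  set x : ℝ := y + 1 with hx
  have hy : y = x + (-1) := by rw [hx]; ring
  -- common middle form
  set c : ℕ → ℝ := fun j => (-1:ℝ)^(n+j) * ((Nat.factorial j : ℝ) * (stirling2 n j)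
      + (Nat.factorial (j+1) : ℝ) * (stirling2 n (j+1))) * x ^ j with hc
  have hS0 : (stirling2 n 0 : ℝ) = 0 := by rw [stirling2_zero hn]; norm_num
  have hStop : (stirling2 n (n+1) : ℝ) = 0 := by rw [stirling2_gt n (n+1) (by omega)]; norm_num
  have hlhs : geomPoly n y = ∑ j ∈ Finset.range (n+1), c j := by
    unfold geomPoly
    have step1 : ∀ k ∈ Finset.range (n+1),
        (stirling2 n k : ℝ) * (Nat.factorial k : ℝ) * y ^ k
        = ∑ j ∈ Finset.range (n+1),
            (x ^ j * (-1:ℝ)^j * ((-1:ℝ)^k * (Nat.factorial k) * (Nat.choose k j) * (stirling2 n k))) := by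
      intro k hk
      rw [hy, add_pow, Finset.mul_sum]
      rw [Finset.sum_subset (Finset.range_subset_range.mpr (by
        simp at hk; omega : k + 1 ≤ n + 1))]
      · apply Finset.sum_congr rfl
        intro j hj
        rcases le_or_gt j k with h | h
        · have hjj : (-1:ℝ)^j * (-1:ℝ)^j = 1 := by
            rw [← pow_add]; exact Even.neg_one_pow ⟨j, rfl⟩
          have h2 : (-1:ℝ)^(k-j) = (-1:ℝ)^j * (-1:ℝ)^k := by
            calc (-1:ℝ)^(k-j) = ((-1:ℝ)^j * (-1:ℝ)^j) * (-1:ℝ)^(k-j) := by rw [hjj, one_mul]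
              _ = (-1:ℝ)^j * ((-1:ℝ)^j * (-1:ℝ)^(k-j)) := by ring
              _ = (-1:ℝ)^j * (-1:ℝ)^k := by rw [← pow_add, Nat.add_sub_cancel' h]
          rw [h2]; ring
        · rw [Nat.choose_eq_zero_of_lt h]; push_cast; ring
      · intro j _ hj
        have : k < j := by simp at hj; omega
        rw [Nat.choose_eq_zero_of_lt this]; push_cast; ring
    rw [Finset.sum_congr rfl step1, Finset.sum_comm]
    apply Finset.sum_congr rfl
    intro j _
    rw [← Finset.mul_sum, key n hn j, hc]
    simp only []
    rw [pow_add]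
    ring
  have hrhs : y * (∑ k ∈ Finset.Icc 1 n,
          (stirling2 n k : ℝ) * (-1) ^ (n + k) * (Nat.factorial k : ℝ) * (y + 1) ^ (k - 1))
      = ∑ j ∈ Finset.range (n+1), c j := by
    rw [← Finset.Ico_add_one_right_eq_Icc, Finset.sum_Ico_eq_sum_range]
    simp only [Nat.succ_sub_one, Nat.add_sub_cancel, ← hx]
    have step1 : ∀ i ∈ Finset.range n,
        (stirling2 n (1+i) : ℝ) * (-1:ℝ) ^ (n + (1+i)) * (Nat.factorial (1+i) : ℝ) * x ^ ((1+i) - 1)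
        = (-1:ℝ)^(n+(i+1)) * (Nat.factorial (i+1) : ℝ) * (stirling2 n (i+1)) * x ^ i := by
      intro i _
      rw [show 1 + i = i + 1 from by omega]
      simp only [Nat.add_sub_cancel]
      ring
    rw [Finset.sum_congr rfl step1, Finset.mul_sum]
    have step2 : ∀ i ∈ Finset.range n,
        y * ((-1:ℝ)^(n+(i+1)) * (Nat.factorial (i+1) : ℝ) * (stirling2 n (i+1)) * x ^ i)
        = ((-1:ℝ)^(n+(i+1)) * (Nat.factorial (i+1) : ℝ) * (stirling2 n (i+1)) * x ^ (i+1))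
          - ((-1:ℝ)^(n+(i+1)) * (Nat.factorial (i+1) : ℝ) * (stirling2 n (i+1)) * x ^ i) := by
      intro i _
      rw [hy, pow_succ]; ring
    rw [Finset.sum_congr rfl step2, Finset.sum_sub_distrib]
    -- piece 1
    have p1 : ∑ i ∈ Finset.range n,
        ((-1:ℝ)^(n+(i+1)) * (Nat.factorial (i+1) : ℝ) * (stirling2 n (i+1)) * x ^ (i+1))
        = ∑ j ∈ Finset.range (n+1),
            ((-1:ℝ)^(n+j) * (Nat.factorial j : ℝ) * (stirling2 n j) * x ^ j) := by
      rw [Finset.sum_range_succ'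
        (fun j => ((-1:ℝ)^(n+j) * (Nat.factorial j : ℝ) * (stirling2 n j) * x ^ j)) n]
      simp only [hS0]
      ring
    -- piece 2
    have p2 : ∑ i ∈ Finset.range n,
        ((-1:ℝ)^(n+(i+1)) * (Nat.factorial (i+1) : ℝ) * (stirling2 n (i+1)) * x ^ i)
        = ∑ j ∈ Finset.range (n+1),
            ((-1:ℝ)^(n+(j+1)) * (Nat.factorial (j+1) : ℝ) * (stirling2 n (j+1)) * x ^ j) := by
      rw [Finset.sum_range_succ
        (fun j => ((-1:ℝ)^(n+(j+1)) * (Nat.factorial (j+1) : ℝ) * (stirling2 n (j+1)) * x ^ j)) n]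
      rw [hStop]
      ring
    rw [p1, p2, ← Finset.sum_sub_distrib]
    apply Finset.sum_congr rfl
    intro j _
    rw [hc]
    simp only []
    rw [show n + (j+1) = (n + j) + 1 from by omega, pow_succ]
    ring
  rw [hlhs, hrhs]
end

section
/- For n > 1 and p ≥ 0, ∫_{-1}^{0} y^p · w_n(y) dy = (-1)^{n+p+1} · ((p+1)/(p+2)) · B_{n-1,p+1}. -/
def pBernoulli : ℕ → ℕ → ℚ
  | 0, _ => 1
  | n + 1, p => p * pBernoulli n p - ((p + 1 : ℚ) ^ 2 / (p + 2)) * pBernoulli n (p + 1)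

lemma stirling2_eq_zero_of_lt : ∀ n k : ℕ, n < k → stirling2 n k = 0 := by
  intro n
  induction n with
  | zero => intro k hk; cases k with
    | zero => omega
    | succ k => rfl
  | succ n ih =>
    intro k hk
    cases k with
    | zero => omega
    | succ k =>
      have h1 : stirling2 n (k + 1) = 0 := ih _ (by omega)
      have h2 : stirling2 n k = 0 := ih _ (by omega)
      simp [stirling2, h1, h2]

/-- The alternating-sign sum `I n p = ∑_{k=0}^n S(n,k)·k!·(-1)^k/(p+k+1)`. -/
noncomputable def auxI (n p : ℕ) : ℝ :=
  ∑ k ∈ Finset.range (n + 1),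
    (stirling2 n k : ℝ) * (Nat.factorial k : ℝ) * (-1) ^ k / (p + k + 1)

lemma auxI_rec (n p : ℕ) : auxI (n + 1) p = (p + 1) * (auxI n (p + 1) - auxI n p) := by
  have key : auxI (n + 1) p
      = ∑ k ∈ Finset.range (n + 1),
        (stirling2 n k : ℝ) * (Nat.factorial k : ℝ) * (-1) ^ k *
          ((k : ℝ) / (p + k + 1) - ((k : ℝ) + 1) / (p + k + 2)) := by
    unfold auxI
    rw [show n + 1 + 1 = n + 2 from rfl, Finset.sum_range_succ']
    have h0 : (stirling2 (n + 1) 0 : ℝ) = 0 := by simp [stirling2]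
    rw [h0]
    simp only [stirling2, Nat.cast_add, Nat.cast_mul, Nat.cast_one, zero_mul, zero_div, add_zero]
    -- split each term
    have hsplit : ∀ i ∈ Finset.range (n + 1),
        ((((i : ℝ) + 1) * (stirling2 n (i + 1) : ℝ) + (stirling2 n i : ℝ)) *
            (Nat.factorial (i + 1) : ℝ) * (-1) ^ (i + 1) / (p + (i + 1) + 1))
        = (((i : ℝ) + 1) * (stirling2 n (i + 1) : ℝ) * (Nat.factorial (i + 1) : ℝ) *
            (-1) ^ (i + 1) / (p + (i + 1) + 1))
          + ((stirling2 n i : ℝ) * (Nat.factorial i : ℝ) * (-1) ^ i *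
              (-(((i : ℝ) + 1)) / (p + i + 2))) := by
      intro i _
      have hne : (p : ℝ) + i + 2 ≠ 0 := by positivity
      rw [Nat.factorial_succ]
      push_cast
      field_simp
      ring
    rw [Finset.sum_congr rfl hsplit, Finset.sum_add_distrib]
    have hA : (∑ i ∈ Finset.range (n + 1),
        (((i : ℝ) + 1) * (stirling2 n (i + 1) : ℝ) * (Nat.factorial (i + 1) : ℝ) *
          (-1) ^ (i + 1) / (p + (i + 1) + 1)))
        = ∑ k ∈ Finset.range (n + 1),
          (k : ℝ) * (stirling2 n k : ℝ) * (Nat.factorial k : ℝ) * (-1) ^ k / (p + k + 1) := by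
      have e1 : (∑ k ∈ Finset.range (n + 2),
          (k : ℝ) * (stirling2 n k : ℝ) * (Nat.factorial k : ℝ) * (-1) ^ k / (p + k + 1))
          = ∑ i ∈ Finset.range (n + 1),
            (((i : ℝ) + 1) * (stirling2 n (i + 1) : ℝ) * (Nat.factorial (i + 1) : ℝ) *
              (-1) ^ (i + 1) / (p + (i + 1) + 1)) := by
        rw [Finset.sum_range_succ']
        push_cast
        simp
      have e2 : (∑ k ∈ Finset.range (n + 2),
          (k : ℝ) * (stirling2 n k : ℝ) * (Nat.factorial k : ℝ) * (-1) ^ k / (p + k + 1))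
          = ∑ k ∈ Finset.range (n + 1),
            (k : ℝ) * (stirling2 n k : ℝ) * (Nat.factorial k : ℝ) * (-1) ^ k / (p + k + 1) := by
        rw [Finset.sum_range_succ, stirling2_eq_zero_of_lt n (n + 1) (by omega)]
        simp
      rw [← e1, e2]
    rw [hA, ← Finset.sum_add_distrib]
    apply Finset.sum_congr rfl
    intro k _
    have h1 : (p : ℝ) + k + 1 ≠ 0 := by positivity
    have h2 : (p : ℝ) + k + 2 ≠ 0 := by positivity
    field_simp
    ring
  rw [key]
  unfold auxI
  rw [mul_sub, Finset.mul_sum, Finset.mul_sum, ← Finset.sum_sub_distrib]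
  apply Finset.sum_congr rfl
  intro k _
  have h1 : (p : ℝ) + k + 1 ≠ 0 := by positivity
  have h2 : (p : ℝ) + k + 2 ≠ 0 := by positivity
  push_cast
  field_simp
  ring

lemma pBernoulli_rec (n p : ℕ) :
    (pBernoulli (n + 1) (p + 1) : ℝ)
      = ((p : ℝ) + 1) * (pBernoulli n (p + 1) : ℝ)
        - (((p : ℝ) + 2) ^ 2 / ((p : ℝ) + 3)) * (pBernoulli n (p + 2) : ℝ) := by
  rw [show pBernoulli (n + 1) (p + 1)
      = ((p + 1 : ℕ) : ℚ) * pBernoulli n (p + 1)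
        - (((p + 1 : ℕ) + 1 : ℚ) ^ 2 / ((p + 1 : ℕ) + 2)) * pBernoulli n (p + 1 + 1)
      from rfl]
  push_cast
  ring_nf

lemma auxI_key : ∀ m p : ℕ,
    auxI (m + 2) p = (-1) ^ (m + 1) * ((p + 1 : ℝ) / (p + 2)) * (pBernoulli (m + 1) (p + 1) : ℝ) := by
  intro m
  induction m with
  | zero =>
    intro p
    have h2 : (p : ℝ) + 2 ≠ 0 := by positivity
    have h3 : (p : ℝ) + 3 ≠ 0 := by positivity
    unfold auxI
    rw [show (0:ℕ) + 2 + 1 = 3 from rfl]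
    rw [Finset.sum_range_succ, Finset.sum_range_succ, Finset.sum_range_one]
    rw [show pBernoulli (0 + 1) (p + 1)
        = ((p + 1 : ℕ) : ℚ) * pBernoulli 0 (p + 1)
          - (((p + 1 : ℕ) + 1 : ℚ) ^ 2 / ((p + 1 : ℕ) + 2)) * pBernoulli 0 (p + 1 + 1)
        from rfl]
    simp only [pBernoulli]
    norm_num [stirling2]
    field_simp
    ring
  | succ m ih =>
    intro p
    rw [show m + 1 + 2 = (m + 2) + 1 from rfl, auxI_rec, ih (p + 1), ih p]
    rw [pBernoulli_rec (m + 1) p]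
    have h2 : (p : ℝ) + 2 ≠ 0 := by positivity
    have h3 : (p : ℝ) + 3 ≠ 0 := by positivity
    push_cast
    field_simp
    ring

theorem integral_pow_mul_geomPoly (n p : ℕ) (hn : 1 < n) :
    ∫ y in (-1 : ℝ)..0, y ^ p * geomPoly n y
      = (-1) ^ (n + p + 1) * ((p + 1 : ℝ) / (p + 2)) * (pBernoulli (n - 1) (p + 1) : ℝ) := by
  obtain ⟨m, rfl⟩ : ∃ m, n = m + 2 := ⟨n - 2, by omega⟩
  have hint : (∫ y in (-1 : ℝ)..0, y ^ p * geomPoly (m + 2) y)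
      = ∑ k ∈ Finset.range (m + 2 + 1),
        (stirling2 (m + 2) k : ℝ) * (Nat.factorial k : ℝ) * ((-1) ^ (p + k) / (p + k + 1)) := by
    have e1 : ∀ y : ℝ, y ^ p * geomPoly (m + 2) y
        = ∑ k ∈ Finset.range (m + 2 + 1),
          (stirling2 (m + 2) k : ℝ) * (Nat.factorial k : ℝ) * y ^ (p + k) := by
      intro y
      unfold geomPoly
      rw [Finset.mul_sum]
      apply Finset.sum_congr rfl
      intro k _
      rw [pow_add]
      ring
    simp_rw [e1]
    rw [intervalIntegral.integral_finset_sum]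
    · apply Finset.sum_congr rfl
      intro k _
      rw [intervalIntegral.integral_const_mul, integral_pow]
      have h1 : (p : ℝ) + k + 1 ≠ 0 := by positivity
      rw [show (0:ℝ) ^ (p + k + 1) = 0 by simp]
      rw [show ((-1:ℝ)) ^ (p + k + 1) = -(-1) ^ (p + k) by rw [pow_succ]; ring]
      push_cast
      field_simp
      ring
    · intro k _
      exact (Continuous.intervalIntegrable (by continuity) _ _)
  rw [hint]
  have : (∑ k ∈ Finset.range (m + 2 + 1),
      (stirling2 (m + 2) k : ℝ) * (Nat.factorial k : ℝ) * ((-1) ^ (p + k) / (p + k + 1)))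
      = (-1) ^ p * auxI (m + 2) p := by
    unfold auxI
    rw [Finset.mul_sum]
    apply Finset.sum_congr rfl
    intro k _
    rw [pow_add]
    ring
  rw [this, auxI_key m p]
  rw [show m + 2 - 1 = m + 1 from rfl]
  have hsgn : ((-1 : ℝ)) ^ (m + 2 + p + 1) = (-1) ^ p * (-1) ^ (m + 1) := by
    rw [show m + 2 + p + 1 = p + (m + 1) + 2 by omega]
    rw [pow_add, pow_add]
    norm_num
  rw [hsgn]
  ring
end

section
/- For all non-negative integers n and p, B_{n,p+1}(x+1) - B_{n,p+1}(x) = ((p+2)/(p+1)) · (B_{n,p}(x+1) - x^n), as an identity of polynomials in x. -/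
open Finset

/-- The p-Bernoulli polynomials `B_{n,p}(x) = ∑ C(n,k) x^{n-k} B_{k,p}`. -/
def pBernoulliPoly (n p : ℕ) (x : ℝ) : ℝ :=
  ∑ k ∈ Finset.range (n + 1), (n.choose k : ℝ) * x ^ (n - k) * (pBernoulli k p : ℝ)

/-- `T n p = B_{n,p}(1)`. -/
def pT (n p : ℕ) : ℚ := ∑ k ∈ Finset.range (n + 1), (n.choose k : ℚ) * pBernoulli k p

lemma pBernoulli_zero (p : ℕ) : pBernoulli 0 p = 1 := rfl

lemma pBernoulli_succ (n p : ℕ) :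
    pBernoulli (n + 1) p
      = p * pBernoulli n p - ((p + 1 : ℚ) ^ 2 / (p + 2)) * pBernoulli n (p + 1) := rfl

lemma pT_zero (p : ℕ) : pT 0 p = 1 := by simp [pT, pBernoulli]

lemma pT_succ (n p : ℕ) :
    pT (n + 1) p = (p + 1) * pT n p - ((p + 1 : ℚ) ^ 2 / (p + 2)) * pT n (p + 1) := by
  have hT : pT n p = (∑ j ∈ Finset.range n, (n.choose (j + 1) : ℚ) * pBernoulli (j + 1) p) + 1 := by
    rw [pT, Finset.sum_range_succ']
    simp [pBernoulli_zero]
  have hTop : (∑ j ∈ Finset.range (n + 1), (n.choose (j + 1) : ℚ) * pBernoulli (j + 1) p)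
      = ∑ j ∈ Finset.range n, (n.choose (j + 1) : ℚ) * pBernoulli (j + 1) p := by
    rw [Finset.sum_range_succ, Nat.choose_eq_zero_of_lt (Nat.lt_succ_self n)]
    simp
  have hB : (∑ j ∈ Finset.range (n + 1), (n.choose j : ℚ) * pBernoulli (j + 1) p)
      = p * pT n p - ((p + 1 : ℚ) ^ 2 / (p + 2)) * pT n (p + 1) := by
    rw [pT, pT, Finset.mul_sum, Finset.mul_sum, ← Finset.sum_sub_distrib]
    exact Finset.sum_congr rfl fun j _ => by rw [pBernoulli_succ]; ring
  have hsplit : (∑ j ∈ Finset.range (n + 1), ((n + 1).choose (j + 1) : ℚ) * pBernoulli (j + 1) p)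
      = (∑ j ∈ Finset.range (n + 1), (n.choose j : ℚ) * pBernoulli (j + 1) p)
        + ∑ j ∈ Finset.range (n + 1), (n.choose (j + 1) : ℚ) * pBernoulli (j + 1) p := by
    rw [← Finset.sum_add_distrib]
    refine Finset.sum_congr rfl fun j _ => ?_
    rw [Nat.choose_succ_succ]
    push_cast
    ring
  rw [pT, Finset.sum_range_succ', hsplit, hTop, hB]
  simp only [Nat.choose_zero_right, Nat.cast_one, pBernoulli_zero, mul_one, one_mul]
  linarith [hT]

lemma pT_sub (n p : ℕ) :
    pT (n + 1) (p + 1) - pBernoulli (n + 1) (p + 1) = ((p + 2 : ℚ) / (p + 1)) * pT (n + 1) p := by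
  induction n generalizing p with
  | zero =>
    have h1 : ((p : ℚ) + 1) ≠ 0 := by positivity
    have h2 : ((p : ℚ) + 2) ≠ 0 := by positivity
    have h3 : ((p : ℚ) + 3) ≠ 0 := by positivity
    rw [pT_succ 0 (p + 1), pT_succ 0 p, pT_zero, pT_zero, pT_zero, pBernoulli_succ,
      pBernoulli_zero, pBernoulli_zero]
    push_cast
    field_simp
    ring
  | succ m ih =>
    have h1 : ((p : ℚ) + 1) ≠ 0 := by positivity
    have h2 : ((p : ℚ) + 2) ≠ 0 := by positivity
    have h3 : ((p : ℚ) + 3) ≠ 0 := by positivity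
    have e1 : pBernoulli (m + 1) (p + 1)
        = pT (m + 1) (p + 1) - ((p + 2 : ℚ) / (p + 1)) * pT (m + 1) p := by
      have := ih p; linarith
    have e2 : pBernoulli (m + 1) (p + 1 + 1)
        = pT (m + 1) (p + 1 + 1)
          - (((p : ℚ) + 1 + 2) / ((p : ℚ) + 1 + 1)) * pT (m + 1) (p + 1) := by
      have h := ih (p + 1)
      push_cast at h ⊢
      linarith
    rw [pT_succ (m + 1) (p + 1), pT_succ (m + 1) p, pBernoulli_succ (m + 1) (p + 1), e1, e2]
    push_cast
    field_simp
    ring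

lemma choose_swap (n j k : ℕ) (hj : j ≤ n) (hk : k ≤ n) :
    n.choose (n - j) * (n - j).choose k = n.choose k * (n - k).choose j := by
  by_cases h : k ≤ n - j
  · rw [Nat.choose_mul h]
    congr 1
    have h1 : n - j - k = n - k - j := by omega
    rw [h1]
    exact Nat.choose_symm (by omega)
  · have hL : (n - j).choose k = 0 := Nat.choose_eq_zero_of_lt (by omega)
    have hR : (n - k).choose j = 0 := Nat.choose_eq_zero_of_lt (by omega)
    rw [hL, hR]
    simp

lemma pBernoulliPoly_add_one (n p : ℕ) (x : ℝ) :
    pBernoulliPoly n p (x + 1)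
      = ∑ m ∈ Finset.range (n + 1), (n.choose m : ℝ) * x ^ (n - m) * (pT m p : ℝ) := by
  have lhs : pBernoulliPoly n p (x + 1)
      = ∑ k ∈ Finset.range (n + 1), ∑ j ∈ Finset.range (n + 1),
          (n.choose k : ℝ) * ((n - k).choose j : ℝ) * x ^ j * (pBernoulli k p : ℝ) := by
    rw [pBernoulliPoly]
    refine Finset.sum_congr rfl fun k hk => ?_
    rw [Finset.mem_range] at hk
    have hk' : k ≤ n := Nat.lt_succ_iff.mp hk
    have hpow : (x + 1) ^ (n - k)
        = ∑ j ∈ Finset.range (n + 1), ((n - k).choose j : ℝ) * x ^ j := by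
      calc (x + 1) ^ (n - k)
          = ∑ j ∈ Finset.range (n - k + 1), x ^ j * 1 ^ (n - k - j) * ((n - k).choose j : ℝ) :=
            add_pow x 1 (n - k)
        _ = ∑ j ∈ Finset.range (n + 1), x ^ j * 1 ^ (n - k - j) * ((n - k).choose j : ℝ) := by
            refine Finset.sum_subset (Finset.range_subset_range.mpr (by omega)) fun j _ hj => ?_
            rw [Finset.mem_range, not_lt] at hj
            rw [Nat.choose_eq_zero_of_lt (by omega)]
            simp
        _ = ∑ j ∈ Finset.range (n + 1), ((n - k).choose j : ℝ) * x ^ j := by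
            refine Finset.sum_congr rfl fun j _ => ?_
            rw [one_pow]
            ring
    rw [hpow, Finset.mul_sum, Finset.sum_mul]
    exact Finset.sum_congr rfl fun j _ => by ring
  have rhs : (∑ m ∈ Finset.range (n + 1), (n.choose m : ℝ) * x ^ (n - m) * (pT m p : ℝ))
      = ∑ m ∈ Finset.range (n + 1), ∑ k ∈ Finset.range (n + 1),
          (n.choose m : ℝ) * (m.choose k : ℝ) * x ^ (n - m) * (pBernoulli k p : ℝ) := by
    refine Finset.sum_congr rfl fun m hm => ?_
    rw [Finset.mem_range] at hm
    have hm' : m ≤ n := Nat.lt_succ_iff.mp hm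
    have hT : ((pT m p : ℚ) : ℝ)
        = ∑ k ∈ Finset.range (n + 1), (m.choose k : ℝ) * (pBernoulli k p : ℝ) := by
      rw [pT]
      push_cast
      refine Finset.sum_subset (Finset.range_subset_range.mpr (by omega)) fun k _ hk => ?_
      rw [Finset.mem_range, not_lt] at hk
      rw [Nat.choose_eq_zero_of_lt (by omega)]
      simp
    rw [hT, Finset.mul_sum]
    exact Finset.sum_congr rfl fun k _ => by ring
  rw [lhs, rhs]
  conv_rhs => rw [Finset.sum_comm]
  refine Finset.sum_congr rfl fun k hk => ?_
  rw [Finset.mem_range] at hk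
  have hk' : k ≤ n := Nat.lt_succ_iff.mp hk
  conv_rhs => rw [← Finset.sum_range_reflect]
  refine Finset.sum_congr rfl fun j hj => ?_
  rw [Finset.mem_range] at hj
  have hj' : j ≤ n := Nat.lt_succ_iff.mp hj
  have h1 : n + 1 - 1 - j = n - j := by omega
  have h2 : n - (n - j) = j := by omega
  rw [h1, h2]
  have hc : ((n.choose (n - j) : ℝ)) * ((n - j).choose k : ℝ)
      = (n.choose k : ℝ) * ((n - k).choose j : ℝ) := by
    exact_mod_cast congrArg (Nat.cast : ℕ → ℝ) (choose_swap n j k hj' hk')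
  calc (n.choose k : ℝ) * ((n - k).choose j : ℝ) * x ^ j * (pBernoulli k p : ℝ)
      = (n.choose k : ℝ) * ((n - k).choose j : ℝ) * (x ^ j * (pBernoulli k p : ℝ)) := by ring
    _ = (n.choose (n - j) : ℝ) * ((n - j).choose k : ℝ) * (x ^ j * (pBernoulli k p : ℝ)) := by
        rw [hc]
    _ = (n.choose (n - j) : ℝ) * ((n - j).choose k : ℝ) * x ^ j * (pBernoulli k p : ℝ) := by ring

theorem pBernoulliPoly_telescopic (n p : ℕ) (x : ℝ) :
    pBernoulliPoly n (p + 1) (x + 1) - pBernoulliPoly n (p + 1) x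
      = ((p + 2 : ℝ) / (p + 1)) * (pBernoulliPoly n p (x + 1) - x ^ n) := by
  rw [pBernoulliPoly_add_one n (p + 1) x, pBernoulliPoly_add_one n p x, pBernoulliPoly,
    ← Finset.sum_sub_distrib]
  have hL : (∑ m ∈ Finset.range (n + 1),
        ((n.choose m : ℝ) * x ^ (n - m) * (pT m (p + 1) : ℝ)
          - (n.choose m : ℝ) * x ^ (n - m) * (pBernoulli m (p + 1) : ℝ)))
      = ∑ i ∈ Finset.range n, (n.choose (i + 1) : ℝ) * x ^ (n - (i + 1))
          * ((pT (i + 1) (p + 1) : ℝ) - (pBernoulli (i + 1) (p + 1) : ℝ)) := by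
    rw [Finset.sum_range_succ', pT_zero, pBernoulli_zero]
    simp only [Rat.cast_one, sub_self, mul_zero, add_zero, Nat.sub_zero, Nat.choose_zero_right,
      Nat.cast_one, one_mul]
    exact Finset.sum_congr rfl fun i _ => by ring
  have hR : (∑ m ∈ Finset.range (n + 1), (n.choose m : ℝ) * x ^ (n - m) * (pT m p : ℝ))
      = (∑ i ∈ Finset.range n, (n.choose (i + 1) : ℝ) * x ^ (n - (i + 1)) * (pT (i + 1) p : ℝ))
        + x ^ n := by
    rw [Finset.sum_range_succ', pT_zero]
    norm_num
  rw [hL, hR, add_sub_cancel_right, Finset.mul_sum]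
  refine Finset.sum_congr rfl fun i _ => ?_
  have key := congrArg (fun q : ℚ => (q : ℝ)) (pT_sub i p)
  push_cast at key
  rw [key]
  ring
end
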